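/- For any 0 < γ₂ < 1/4 there exists an integer n₀ such that for every 3-graph H on n > n₀ vertices with δ₁(H) ≥ (1/4 + γ₂)·C(n,2), there is a set R ⊆ V(H) of size at most γ₂·n with the following property: for every k ≤ γ₂³·n/12 and every k mutually disjoint pairs {a₁,b₁}, …, {a_k,b_k} of vertices of H, there are 3k distinct vertices u_i, v_i, w_i (i = 1,…,k) in R such that {a_i, u_i, v_i} ∈ E(H) and {v_i, w_i, b_i} ∈ E(H) for all i = 1, …, k. -/

import Mathlib

open Finset

/-- The degree of a vertex in a 3-graph: the number of edges containing it. -/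
def hdeg {α : Type*} [DecidableEq α] (H : Finset (Finset α)) (v : α) : ℕ :=
  (H.filter (fun e => v ∈ e)).card

set_option maxHeartbeats 1000000

/-- vertices `u` such that `{x,u,v}` is an edge. -/
def Nbr {n : ℕ} (H : Finset (Finset (Fin n))) (x v : Fin n) : Finset (Fin n) :=
  univ.filter fun u => ({x, u, v} : Finset (Fin n)) ∈ H

lemma mem_Nbr {n : ℕ} {H : Finset (Finset (Fin n))} {x v u : Fin n} :
    u ∈ Nbr H x v ↔ ({x, u, v} : Finset (Fin n)) ∈ H := by
  simp [Nbr]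

lemma codeg_le_Nbr_card {n : ℕ} {H : Finset (Finset (Fin n))}
    (hcard : ∀ e ∈ H, e.card = 3) {x v : Fin n} (hxv : x ≠ v) :
    (H.filter fun e => x ∈ e ∧ v ∈ e).card ≤ (Nbr H x v).card := by
  classical
  set D := H.filter fun e => x ∈ e ∧ v ∈ e with hD
  have key : ∀ e ∈ D, ∃ u, u ∈ (e.erase x).erase v ∧ ({x, u, v} : Finset (Fin n)) = e := by
    intro e he
    simp only [hD, mem_filter] at he
    obtain ⟨heH, hx, hv⟩ := he
    have h3 : e.card = 3 := hcard e heH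
    have h2 : (e.erase x).card = 2 := by
      rw [Finset.card_erase_of_mem hx, h3]
    have hv' : v ∈ e.erase x := Finset.mem_erase.2 ⟨hxv.symm, hv⟩
    have h1 : ((e.erase x).erase v).card = 1 := by
      rw [Finset.card_erase_of_mem hv', h2]
    obtain ⟨u, hu⟩ := Finset.card_eq_one.1 h1
    refine ⟨u, by simp [hu], ?_⟩
    have hue : u ∈ e := by
      have : u ∈ (e.erase x).erase v := by simp [hu]
      exact Finset.mem_of_mem_erase (Finset.mem_of_mem_erase this)
    have hux : u ≠ x := by
      have : u ∈ e.erase x := by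
        have : u ∈ (e.erase x).erase v := by simp [hu]
        exact Finset.mem_of_mem_erase this
      exact Finset.ne_of_mem_erase this
    have huv : u ≠ v := by
      have : u ∈ (e.erase x).erase v := by simp [hu]
      exact Finset.ne_of_mem_erase this
    have hsub : ({x, u, v} : Finset (Fin n)) ⊆ e := by
      intro y hy
      simp only [Finset.mem_insert, Finset.mem_singleton] at hy
      rcases hy with rfl | rfl | rfl <;> assumption
    have hc : ({x, u, v} : Finset (Fin n)).card = 3 := by
      rw [Finset.card_insert_of_notMem, Finset.card_insert_of_notMem] <;>
        simp [hux.symm, huv, hxv]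
    exact Finset.eq_of_subset_of_card_le hsub (by rw [h3, hc])
  choose f hf1 hf2 using key
  have : ∀ (a : Finset (Fin n)) (h : a ∈ D), True := fun _ _ => trivial
  calc D.card ≤ (Nbr H x v).card := by
        apply Finset.card_le_card_of_injOn (fun e => if h : e ∈ D then f e h else x)
        · intro e he
          rw [Finset.mem_coe] at he ⊢
          simp only [he, dif_pos]
          rw [mem_Nbr, hf2 e he]
          exact (Finset.mem_filter.1 he).1
        · intro e he e' he' hee
          simp only [Finset.mem_coe] at he he'
          simp only [he, he', dif_pos] at hee
          rw [← hf2 e he, ← hf2 e' he', hee]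

/-- vertices with large co-neighbourhood w.r.t. `x`. -/
noncomputable def Aset {n : ℕ} (γ : ℝ) (H : Finset (Finset (Fin n))) (x : Fin n) :
    Finset (Fin n) :=
  univ.filter fun v => (γ * n / 8 : ℝ) ≤ ((Nbr H x v).card : ℝ)

lemma Aset_card {n : ℕ} {γ : ℝ} {H : Finset (Finset (Fin n))}
    (hcard : ∀ e ∈ H, e.card = 3) (hγ0 : 0 < γ) (hγ1 : γ ≤ 1/4)
    (hn : (10 : ℝ) ≤ γ * n) {x : Fin n}
    (hdx : (1/4 + γ) * (n.choose 2 : ℝ) ≤ (hdeg H x : ℝ)) :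
    ((1/2 + γ/4) * n : ℝ) ≤ ((Aset γ H x).card : ℝ) := by
  classical
  set A := Aset γ H x with hA
  set Hx := H.filter (fun e => x ∈ e) with hHx
  have hsplit : (Hx.filter fun e => e.erase x ⊆ A).card
      + (Hx.filter fun e => ¬ (e.erase x ⊆ A)).card = Hx.card :=
    Finset.card_filter_add_card_filter_not _
  -- bound 1
  have hb1 : (Hx.filter fun e => e.erase x ⊆ A).card ≤ (A.card).choose 2 := by
    rw [← Finset.card_powersetCard 2 A]
    apply Finset.card_le_card_of_injOn (fun e => e.erase x)
    · intro e he
      simp only [hHx, Finset.mem_coe, Finset.mem_filter] at he ⊢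
      obtain ⟨⟨heH, hx⟩, hsub⟩ := he
      refine Finset.mem_powersetCard.2 ⟨hsub, ?_⟩
      rw [Finset.card_erase_of_mem hx, hcard e heH]
    · intro e he e' he' hee
      simp only [Finset.mem_coe, hHx, Finset.mem_filter] at he he'
      have h1 : insert x (e.erase x) = e := Finset.insert_erase he.1.2
      have h2 : insert x (e'.erase x) = e' := Finset.insert_erase he'.1.2
      simp only at hee
      rw [← h1, ← h2, hee]
  -- bound 2
  have hb2 : ((Hx.filter fun e => ¬ (e.erase x ⊆ A)).card : ℝ) ≤ n * (γ * n / 8) := by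
    have hsub : (Hx.filter fun e => ¬ (e.erase x ⊆ A)) ⊆
        ((univ \ A).erase x).biUnion (fun v => H.filter fun e => x ∈ e ∧ v ∈ e) := by
      intro e he
      simp only [hHx, Finset.mem_filter] at he
      obtain ⟨⟨heH, hx⟩, hns⟩ := he
      obtain ⟨v, hv1, hv2⟩ := Finset.not_subset.1 hns
      refine Finset.mem_biUnion.2 ⟨v, ?_, ?_⟩
      · exact Finset.mem_erase.2 ⟨Finset.ne_of_mem_erase hv1,
          Finset.mem_sdiff.2 ⟨Finset.mem_univ _, hv2⟩⟩
      · exact Finset.mem_filter.2 ⟨heH, hx, Finset.mem_of_mem_erase hv1⟩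
    have h1 : ((Hx.filter fun e => ¬ (e.erase x ⊆ A)).card : ℝ)
        ≤ ∑ v ∈ (univ \ A).erase x, ((H.filter fun e => x ∈ e ∧ v ∈ e).card : ℝ) := by
      have := le_trans (Finset.card_le_card hsub) (Finset.card_biUnion_le)
      exact_mod_cast this
    have h2 : ∀ v ∈ (univ \ A).erase x,
        ((H.filter fun e => x ∈ e ∧ v ∈ e).card : ℝ) ≤ γ * n / 8 := by
      intro v hv
      have hvx : v ≠ x := Finset.ne_of_mem_erase hv
      have hvA : v ∉ A := (Finset.mem_sdiff.1 (Finset.mem_of_mem_erase hv)).2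
      have hsmall : ((Nbr H x v).card : ℝ) < γ * n / 8 := by
        by_contra hcon
        exact hvA (by simp [hA, Aset, le_of_not_gt hcon])
      calc ((H.filter fun e => x ∈ e ∧ v ∈ e).card : ℝ)
          ≤ ((Nbr H x v).card : ℝ) := by
            exact_mod_cast codeg_le_Nbr_card hcard (Ne.symm hvx)
        _ ≤ γ * n / 8 := le_of_lt hsmall
    calc ((Hx.filter fun e => ¬ (e.erase x ⊆ A)).card : ℝ)
        ≤ ∑ v ∈ (univ \ A).erase x, ((H.filter fun e => x ∈ e ∧ v ∈ e).card : ℝ) := h1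
      _ ≤ ∑ _v ∈ (univ \ A).erase x, (γ * n / 8) := Finset.sum_le_sum h2
      _ = ((univ \ A).erase x).card * (γ * n / 8) := by rw [Finset.sum_const, nsmul_eq_mul]
      _ ≤ n * (γ * n / 8) := by
          apply mul_le_mul_of_nonneg_right
          · exact_mod_cast (Finset.card_le_card (Finset.subset_univ _)).trans
              (le_of_eq (by simp))
          · positivity
  -- combine
  have hdeg_eq : hdeg H x = Hx.card := rfl
  have hch : ((A.card).choose 2 : ℝ) ≤ ((A.card : ℝ))^2 / 2 := by
    rw [Nat.cast_choose_two]
    have : (0:ℝ) ≤ (A.card : ℝ) := Nat.cast_nonneg _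
    nlinarith
  have hn2 : ((n.choose 2 : ℕ) : ℝ) = n * (n - 1) / 2 := Nat.cast_choose_two ℝ n
  have hkey : ((1/2 + γ/4) * n)^2 ≤ ((A.card : ℝ))^2 := by
    have htot : (1/4 + γ) * ((n:ℝ) * (n - 1) / 2)
        ≤ ((A.card : ℝ))^2 / 2 + n * (γ * n / 8) := by
      have := hdx
      rw [hn2] at this
      have hc : ((Hx.card : ℕ) : ℝ)
          ≤ ((A.card).choose 2 : ℝ) + ((Hx.filter fun e => ¬ (e.erase x ⊆ A)).card : ℝ) := by
        rw [← hsplit]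
        push_cast
        have := hb1
        exact_mod_cast add_le_add_left (by exact_mod_cast hb1) _
      calc (1/4 + γ) * ((n:ℝ) * (n - 1) / 2) ≤ (hdeg H x : ℝ) := this
        _ = ((Hx.card : ℕ) : ℝ) := by rw [hdeg_eq]
        _ ≤ ((A.card).choose 2 : ℝ) + ((Hx.filter fun e => ¬ (e.erase x ⊆ A)).card : ℝ) := hc
        _ ≤ ((A.card : ℝ))^2 / 2 + n * (γ * n / 8) := add_le_add hch hb2
    have hn0 : (0:ℝ) ≤ n := Nat.cast_nonneg _
    nlinarith [hn, hγ0, hγ1, sq_nonneg ((A.card : ℝ))]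
  have h0 : (0:ℝ) ≤ ((A.card : ℝ)) := Nat.cast_nonneg _
  nlinarith [hkey, h0, sq_nonneg ((1/2 + γ/4) * n - (A.card : ℝ)), hn, hγ0]

lemma exists_hitting {n m s : ℕ} (hm : 0 < m) (hmn : m ≤ n)
    (𝒮 : Finset (Finset (Fin n)))
    (hineq : ∀ T ∈ 𝒮, (𝒮.card : ℝ) * 2^s *
        Real.exp (-(T.card : ℝ)/(2*((n/m + 1 : ℕ) : ℝ))) < 1) :
    ∃ R : Finset (Fin n), R.card ≤ m ∧ ∀ T ∈ 𝒮, s ≤ (R ∩ T).card := by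
  classical
  rcases Finset.eq_empty_or_nonempty 𝒮 with h𝒮 | h𝒮
  · exact ⟨∅, by simp, by simp [h𝒮]⟩
  have hn : 0 < n := lt_of_lt_of_le hm hmn
  set Q : ℕ := n/m + 1 with hQ
  set res : Fin n → Fin m := fun i => ⟨(i : ℕ) % m, Nat.mod_lt _ hm⟩ with hres
  set blk : Fin m → Finset (Fin n) := fun b => univ.filter (fun i => res i = b) with hblk
  set q : Fin m → ℕ := fun b => (blk b).card with hq
  -- block sizes
  have hq_pos : ∀ b, 0 < q b := by
    intro b
    refine Finset.card_pos.2 ⟨⟨(b : ℕ), lt_of_lt_of_le b.2 hmn⟩, ?_⟩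
    simp only [hblk, Finset.mem_filter, Finset.mem_univ, true_and, hres]
    exact Fin.ext (by simpa using Nat.mod_eq_of_lt b.2)
  have hq_le : ∀ b, q b ≤ Q := by
    intro b
    show (blk b).card ≤ Q
    rw [← Finset.card_range Q]
    refine Finset.card_le_card_of_injOn (fun i : Fin n => (i : ℕ) / m) ?_ ?_
    · intro i _
      refine Finset.mem_range.2 (lt_of_le_of_lt ?_ (Nat.lt_succ_self _))
      exact Nat.div_le_div_right (le_of_lt i.2)
    · intro i hi i' hi' hii
      simp only [Finset.coe_filter, Set.mem_setOf_eq, hblk, Finset.mem_coe,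
        Finset.mem_filter] at hi hi'
      apply Fin.ext
      have h1 : (i : ℕ) % m = (i' : ℕ) % m := by
        have := hi.2
        have := hi'.2
        have e1 : (i : ℕ) % m = (b : ℕ) := congrArg Fin.val hi.2
        have e2 : (i' : ℕ) % m = (b : ℕ) := congrArg Fin.val hi'.2
        rw [e1, e2]
      simp only at hii
      calc (i : ℕ) = m * ((i:ℕ)/m) + (i:ℕ) % m := (Nat.div_add_mod _ _).symm
        _ = m * ((i':ℕ)/m) + (i':ℕ) % m := by rw [hii, h1]
        _ = (i' : ℕ) := Nat.div_add_mod _ _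
  have hpart : ∀ T : Finset (Fin n), ∑ b, ((blk b ∩ T).card) = T.card := by
    intro T
    have := Finset.card_eq_sum_card_fiberwise
      (f := res) (s := T) (t := univ) (fun x _ => Finset.mem_univ _)
    rw [this]
    apply Finset.sum_congr rfl
    intro b _
    congr 1
    ext i
    simp only [hblk, Finset.mem_inter, Finset.mem_filter, Finset.mem_univ, true_and]
    tauto
  -- sample space
  set Ω : Finset (Fin m → Fin n) := Fintype.piFinset blk with hΩ
  have hΩcard : (Ω.card : ℝ) = ∏ b, (q b : ℝ) := by
    rw [hΩ, Fintype.card_piFinset]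
    push_cast
    rfl
  have hΩpos : 0 < Ω.card := by
    rw [hΩ, Fintype.card_piFinset]
    exact Finset.prod_pos (fun b _ => hq_pos b)
  set X : Finset (Fin n) → (Fin m → Fin n) → ℕ :=
    fun T f => (univ.filter (fun b => f b ∈ T)).card with hX
  -- MGF identity
  have hMGF : ∀ T : Finset (Fin n),
      ∑ f ∈ Ω, ((1:ℝ)/2)^(X T f) = ∏ b, ((q b : ℝ) - ((blk b ∩ T).card : ℝ)/2) := by
    intro T
    have key := Finset.prod_univ_sum blk
      (fun (_b : Fin m) (x : Fin n) => if x ∈ T then ((1:ℝ)/2) else 1)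
    rw [← hΩ] at key
    have lhs_eq : ∀ b, (∑ x ∈ blk b, if x ∈ T then ((1:ℝ)/2) else 1)
        = (q b : ℝ) - ((blk b ∩ T).card : ℝ)/2 := by
      intro b
      rw [Finset.sum_ite, Finset.sum_const, Finset.sum_const]
      have h1 : (blk b).filter (fun x => x ∈ T) = blk b ∩ T := by
        ext i; simp [Finset.mem_inter]
      have h2 : ((blk b).filter (fun x => ¬ x ∈ T)).card = q b - (blk b ∩ T).card := by
        rw [← h1]
        show _ = (blk b).card - _
        have := Finset.card_filter_add_card_filter_not
          (s := blk b) (p := fun x => x ∈ T)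
        omega
      rw [h1, h2, nsmul_eq_mul, nsmul_eq_mul]
      have hle : (blk b ∩ T).card ≤ q b := Finset.card_le_card (Finset.inter_subset_left)
      have : ((q b - (blk b ∩ T).card : ℕ) : ℝ) = (q b : ℝ) - ((blk b ∩ T).card : ℝ) := by
        push_cast [hle]
        ring
      rw [this]
      ring
    have rhs_eq : ∀ f ∈ Ω, (∏ b, if f b ∈ T then ((1:ℝ)/2) else 1) = ((1:ℝ)/2)^(X T f) := by
      intro f _
      rw [Finset.prod_ite, Finset.prod_const, Finset.prod_const]
      simp [hX]
    calc ∑ f ∈ Ω, ((1:ℝ)/2)^(X T f)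
        = ∑ f ∈ Ω, ∏ b, (if f b ∈ T then ((1:ℝ)/2) else 1) := by
          apply Finset.sum_congr rfl
          intro f hf
          rw [rhs_eq f hf]
      _ = ∏ b, ∑ x ∈ blk b, (if x ∈ T then ((1:ℝ)/2) else 1) := key.symm
      _ = ∏ b, ((q b : ℝ) - ((blk b ∩ T).card : ℝ)/2) := by
          exact Finset.prod_congr rfl (fun b _ => lhs_eq b)
  -- bad sets
  set bad : Finset (Fin n) → Finset (Fin m → Fin n) :=
    fun T => Ω.filter (fun f => X T f < s) with hbad
  have hbad_card : ∀ T ∈ 𝒮, ((bad T).card : ℝ)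
      ≤ (Ω.card : ℝ) * (2^s * Real.exp (-(T.card : ℝ)/(2*(Q:ℝ)))) := by
    intro T hT
    have step1 : ((bad T).card : ℝ) ≤ 2^s * ∑ f ∈ Ω, ((1:ℝ)/2)^(X T f) := by
      rw [Finset.mul_sum]
      calc ((bad T).card : ℝ) = ∑ _f ∈ bad T, (1:ℝ) := by simp
        _ ≤ ∑ f ∈ bad T, 2^s * ((1:ℝ)/2)^(X T f) := by
            apply Finset.sum_le_sum
            intro f hf
            have hfs : X T f ≤ s := le_of_lt (Finset.mem_filter.1 hf).2
            have h2 : (2:ℝ)^(X T f) ≤ 2^s := pow_le_pow_right₀ one_le_two hfs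
            have h3 : (2:ℝ)^(X T f) * ((1:ℝ)/2)^(X T f) = 1 := by
              rw [← mul_pow]; norm_num
            nlinarith [pow_pos (by norm_num : (0:ℝ) < 1/2) (X T f)]
        _ ≤ ∑ f ∈ Ω, 2^s * ((1:ℝ)/2)^(X T f) := by
            apply Finset.sum_le_sum_of_subset_of_nonneg (Finset.filter_subset _ _)
            intro f _ _
            positivity
    have step2 : ∏ b, ((q b : ℝ) - ((blk b ∩ T).card : ℝ)/2)
        ≤ (Ω.card : ℝ) * Real.exp (-(T.card : ℝ)/(2*(Q:ℝ))) := by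
      have hfac : ∀ b, ((q b : ℝ) - ((blk b ∩ T).card : ℝ)/2)
          ≤ (q b : ℝ) * Real.exp (-((blk b ∩ T).card : ℝ)/(2*(Q:ℝ))) := by
        intro b
        set c := ((blk b ∩ T).card : ℝ) with hc
        have hc0 : 0 ≤ c := Nat.cast_nonneg _
        have hcq : c ≤ (q b : ℝ) := by
          show ((blk b ∩ T).card : ℝ) ≤ (((blk b).card : ℕ) : ℝ)
          exact_mod_cast Finset.card_le_card Finset.inter_subset_left
        have hQ0 : (0:ℝ) < (Q:ℝ) := by positivity
        have hexp : 1 - c/(2*(Q:ℝ)) ≤ Real.exp (-c/(2*(Q:ℝ))) := by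
          have h := Real.add_one_le_exp (-c/(2*(Q:ℝ)))
          have : -c/(2*(Q:ℝ)) = -(c/(2*(Q:ℝ))) := neg_div _ _
          linarith
        have hqQ : (q b : ℝ) ≤ (Q : ℝ) := by exact_mod_cast hq_le b
        have h1 : (q b : ℝ) * (1 - c/(2*(Q:ℝ))) ≤ (q b : ℝ) * Real.exp (-c/(2*(Q:ℝ))) := by
          apply mul_le_mul_of_nonneg_left hexp (Nat.cast_nonneg _)
        have h2 : (q b : ℝ) - c/2 ≤ (q b : ℝ) * (1 - c/(2*(Q:ℝ))) := by
          have : (q b : ℝ) * (c/(2*(Q:ℝ))) ≤ (Q:ℝ) * (c/(2*(Q:ℝ))) :=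
            mul_le_mul_of_nonneg_right hqQ (by positivity)
          have hQc : (Q:ℝ) * (c/(2*(Q:ℝ))) = c/2 := by field_simp
          nlinarith
        linarith
      calc ∏ b, ((q b : ℝ) - ((blk b ∩ T).card : ℝ)/2)
          ≤ ∏ b, ((q b : ℝ) * Real.exp (-((blk b ∩ T).card : ℝ)/(2*(Q:ℝ)))) := by
            apply Finset.prod_le_prod
            · intro b _
              have hcq : ((blk b ∩ T).card : ℝ) ≤ (q b : ℝ) := by
                exact_mod_cast Finset.card_le_card Finset.inter_subset_left
              have : (0:ℝ) ≤ ((blk b ∩ T).card : ℝ) := Nat.cast_nonneg _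
              linarith
            · intro b _
              exact hfac b
        _ = (∏ b, (q b : ℝ)) * ∏ b, Real.exp (-((blk b ∩ T).card : ℝ)/(2*(Q:ℝ))) :=
            Finset.prod_mul_distrib
        _ = (Ω.card : ℝ) * Real.exp (∑ b, -((blk b ∩ T).card : ℝ)/(2*(Q:ℝ))) := by
            rw [hΩcard, Real.exp_sum]
        _ = (Ω.card : ℝ) * Real.exp (-(T.card : ℝ)/(2*(Q:ℝ))) := by
            congr 1
            congr 1
            rw [← hpart T]
            push_cast
            rw [← Finset.sum_div]
            congr 1
            rw [← Finset.sum_neg_distrib]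
    calc ((bad T).card : ℝ) ≤ 2^s * ∑ f ∈ Ω, ((1:ℝ)/2)^(X T f) := step1
      _ = 2^s * ∏ b, ((q b : ℝ) - ((blk b ∩ T).card : ℝ)/2) := by rw [hMGF T]
      _ ≤ 2^s * ((Ω.card : ℝ) * Real.exp (-(T.card : ℝ)/(2*(Q:ℝ)))) := by
          apply mul_le_mul_of_nonneg_left step2 (by positivity)
      _ = (Ω.card : ℝ) * (2^s * Real.exp (-(T.card : ℝ)/(2*(Q:ℝ)))) := by ring
  -- union bound
  have hsum : ∑ T ∈ 𝒮, ((bad T).card : ℝ) < (Ω.card : ℝ) := by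
    have hterm : ∀ T ∈ 𝒮, ((bad T).card : ℝ) < (Ω.card : ℝ) / (𝒮.card : ℝ) := by
      intro T hT
      have h𝒮pos : (0:ℝ) < (𝒮.card : ℝ) := by
        exact_mod_cast Finset.card_pos.2 h𝒮
      have := hineq T hT
      have hΩpos' : (0:ℝ) < (Ω.card : ℝ) := by exact_mod_cast hΩpos
      calc ((bad T).card : ℝ)
          ≤ (Ω.card : ℝ) * (2^s * Real.exp (-(T.card : ℝ)/(2*(Q:ℝ)))) := hbad_card T hT
        _ < (Ω.card : ℝ) * (1 / (𝒮.card : ℝ)) := by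
            apply mul_lt_mul_of_pos_left _ hΩpos'
            rw [lt_div_iff₀ h𝒮pos]
            calc (2:ℝ)^s * Real.exp (-(T.card : ℝ)/(2*(Q:ℝ))) * (𝒮.card : ℝ)
                = (𝒮.card : ℝ) * 2^s * Real.exp (-(T.card : ℝ)/(2*(Q:ℝ))) := by ring
              _ < 1 := this
        _ = (Ω.card : ℝ) / (𝒮.card : ℝ) := by ring
    calc ∑ T ∈ 𝒮, ((bad T).card : ℝ)
        < ∑ _T ∈ 𝒮, (Ω.card : ℝ) / (𝒮.card : ℝ) := Finset.sum_lt_sum_of_nonempty h𝒮 hterm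
      _ = (Ω.card : ℝ) := by
          rw [Finset.sum_const, nsmul_eq_mul]
          field_simp
  -- a good sample exists
  have hgood : ∃ f ∈ Ω, ∀ T ∈ 𝒮, s ≤ X T f := by
    by_contra hcon
    push_neg at hcon
    have hsub : Ω ⊆ 𝒮.biUnion bad := by
      intro f hf
      obtain ⟨T, hT, hXT⟩ := hcon f hf
      exact Finset.mem_biUnion.2 ⟨T, hT, Finset.mem_filter.2 ⟨hf, hXT⟩⟩
    have h1 : Ω.card ≤ ∑ T ∈ 𝒮, (bad T).card :=
      le_trans (Finset.card_le_card hsub) Finset.card_biUnion_le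
    have h2 : (Ω.card : ℝ) ≤ ∑ T ∈ 𝒮, ((bad T).card : ℝ) := by exact_mod_cast h1
    linarith
  obtain ⟨f, hfΩ, hfgood⟩ := hgood
  have hfinj : Function.Injective f := by
    intro b b' hbb
    have hb : f b ∈ blk b := (Fintype.mem_piFinset.1 hfΩ) b
    have hb' : f b' ∈ blk b' := (Fintype.mem_piFinset.1 hfΩ) b'
    simp only [hblk, Finset.mem_filter] at hb hb'
    rw [← hb.2, ← hb'.2, hbb]
  refine ⟨univ.image f, ?_, ?_⟩
  · calc (univ.image f).card ≤ (univ : Finset (Fin m)).card := Finset.card_image_le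
      _ = m := by simp
  · intro T hT
    calc s ≤ X T f := hfgood T hT
      _ ≤ ((univ.image f) ∩ T).card := by
          apply Finset.card_le_card_of_injOn f
          · intro b hb
            simp only [Finset.mem_coe, Finset.mem_filter] at hb
            exact Finset.mem_inter.2 ⟨Finset.mem_image_of_mem f (Finset.mem_univ _), hb.2⟩
          · exact fun a _ a' _ h => hfinj h

lemma pick_avoid {n : ℕ} {X used : Finset (Fin n)} {s : ℕ}
    (hX : s ≤ X.card) (hused : used.card < s) : ∃ x ∈ X, x ∉ used := by
  by_contra hcon
  push_neg at hcon
  have : X ⊆ used := fun x hx => hcon x hx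
  have := Finset.card_le_card this
  omega

lemma greedy {n : ℕ} {γ : ℝ} {H : Finset (Finset (Fin n))} {R : Finset (Fin n)} {s : ℕ}
    (hP1 : ∀ a b : Fin n, s ≤ ((R ∩ (Aset γ H a ∩ Aset γ H b)).card))
    (hP2 : ∀ x v : Fin n, (γ * n / 8 : ℝ) ≤ ((Nbr H x v).card : ℝ) →
      s ≤ ((R ∩ Nbr H x v).card)) :
    ∀ (k : ℕ) (a b : Fin k → Fin n) (used : Finset (Fin n)), used.card + 3*k ≤ s →
    ∃ u v w : Fin k → Fin n,
      (∀ i, (u i ∈ R ∧ u i ∉ used) ∧ (v i ∈ R ∧ v i ∉ used) ∧ (w i ∈ R ∧ w i ∉ used)) ∧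
      Function.Injective (fun p : Fin k × Fin 3 =>
        if p.2 = 0 then u p.1 else if p.2 = 1 then v p.1 else w p.1) ∧
      ∀ i, ({a i, u i, v i} : Finset (Fin n)) ∈ H ∧
        ({v i, w i, b i} : Finset (Fin n)) ∈ H := by
  intro k
  induction k with
  | zero =>
      intro a b used hused
      exact ⟨Fin.elim0, Fin.elim0, Fin.elim0, fun i => i.elim0,
        fun p _ _ => p.1.elim0, fun i => i.elim0⟩
  | succ k ih =>
      intro a b used hused
      -- pick v0
      obtain ⟨v0, hv0X, hv0u⟩ := pick_avoid (used := used) (hP1 (a 0) (b 0)) (by omega)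
      have hv0R : v0 ∈ R := (Finset.mem_inter.1 hv0X).1
      have hv0A : v0 ∈ Aset γ H (a 0) ∩ Aset γ H (b 0) := (Finset.mem_inter.1 hv0X).2
      have hv0a : (γ * n / 8 : ℝ) ≤ ((Nbr H (a 0) v0).card : ℝ) := by
        have := (Finset.mem_inter.1 hv0A).1
        simpa [Aset] using this
      have hv0b : (γ * n / 8 : ℝ) ≤ ((Nbr H (b 0) v0).card : ℝ) := by
        have := (Finset.mem_inter.1 hv0A).2
        simpa [Aset] using this
      -- pick u0
      set used1 := insert v0 used with hused1
      have hused1c : used1.card ≤ used.card + 1 := Finset.card_insert_le _ _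
      obtain ⟨u0, hu0X, hu0u⟩ := pick_avoid (used := used1) (hP2 (a 0) v0 hv0a) (by omega)
      have hu0R : u0 ∈ R := (Finset.mem_inter.1 hu0X).1
      have hu0N : ({a 0, u0, v0} : Finset (Fin n)) ∈ H := by
        have := (Finset.mem_inter.1 hu0X).2
        simpa [Nbr] using this
      -- pick w0
      set used2 := insert u0 used1 with hused2
      have hused2c : used2.card ≤ used.card + 2 :=
        le_trans (Finset.card_insert_le _ _) (by omega)
      obtain ⟨w0, hw0X, hw0u⟩ := pick_avoid (used := used2) (hP2 (b 0) v0 hv0b) (by omega)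
      have hw0R : w0 ∈ R := (Finset.mem_inter.1 hw0X).1
      have hw0N : ({b 0, w0, v0} : Finset (Fin n)) ∈ H := by
        have := (Finset.mem_inter.1 hw0X).2
        simpa [Nbr] using this
      have hw0N' : ({v0, w0, b 0} : Finset (Fin n)) ∈ H := by
        have heq : ({v0, w0, b 0} : Finset (Fin n)) = {b 0, w0, v0} := by
          ext y; simp only [Finset.mem_insert, Finset.mem_singleton]; tauto
        rwa [heq]
      -- recurse
      set used3 := insert w0 used2 with hused3
      have hused3c : used3.card ≤ used.card + 3 :=
        le_trans (Finset.card_insert_le _ _) (by omega)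
      obtain ⟨u', v', w', hmem', hinj', hedge'⟩ :=
        ih (fun i => a i.succ) (fun i => b i.succ) used3 (by omega)
      -- assemble
      refine ⟨Fin.cons u0 u', Fin.cons v0 v', Fin.cons w0 w', ?_, ?_, ?_⟩
      · intro i
        refine Fin.cases ?_ ?_ i
        · simp only [Fin.cons_zero]
          refine ⟨⟨hu0R, fun h => hu0u (by simp [hused1, h])⟩,
            ⟨hv0R, hv0u⟩, ⟨hw0R, fun h => hw0u (by simp [hused2, hused1, h])⟩⟩
        · intro j
          simp only [Fin.cons_succ]
          obtain ⟨⟨h1, h2⟩, ⟨h3, h4⟩, ⟨h5, h6⟩⟩ := hmem' j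
          have husub : used ⊆ used3 := by
            intro y hy
            simp [hused3, hused2, hused1, hy]
          exact ⟨⟨h1, fun h => h2 (husub h)⟩, ⟨h3, fun h => h4 (husub h)⟩,
            ⟨h5, fun h => h6 (husub h)⟩⟩
      · -- injectivity
        have hd1 : u0 ≠ v0 := fun h => hu0u (by simp [hused1, h])
        have hd2 : w0 ≠ u0 := fun h => hw0u (by simp [hused2, h])
        have hd3 : w0 ≠ v0 := fun h => hw0u (by simp [hused2, hused1, h])
        have hin3 : ∀ t : Fin 3,
            (if t = 0 then u0 else if t = 1 then v0 else w0) ∈ used3 := by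
          intro t
          fin_cases t <;> simp [hused3, hused2, hused1]
        have hout3 : ∀ (j : Fin k) (t : Fin 3),
            (if t = 0 then u' j else if t = 1 then v' j else w' j) ∉ used3 := by
          intro j t
          obtain ⟨⟨_, h2⟩, ⟨_, h4⟩, ⟨_, h6⟩⟩ := hmem' j
          fin_cases t <;> simpa
        intro p q hpq
        obtain ⟨i, t⟩ := p
        obtain ⟨j, t'⟩ := q
        simp only at hpq
        rcases Fin.eq_zero_or_eq_succ i with rfl | ⟨i', rfl⟩ <;>
          rcases Fin.eq_zero_or_eq_succ j with rfl | ⟨j', rfl⟩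
        · -- both zero
          simp only [Fin.cons_zero] at hpq
          have : t = t' := by
            fin_cases t <;> fin_cases t' <;> simp_all <;>
              first
              | rfl
              | exact absurd hpq hd1
              | exact absurd hpq hd1.symm
              | exact absurd hpq hd2
              | exact absurd hpq hd2.symm
              | exact absurd hpq hd3
              | exact absurd hpq hd3.symm
          rw [this]
        · -- zero, succ
          exfalso
          simp only [Fin.cons_zero, Fin.cons_succ] at hpq
          exact hout3 j' t' (hpq ▸ hin3 t)
        · -- succ, zero
          exfalso
          simp only [Fin.cons_zero, Fin.cons_succ] at hpq
          exact hout3 i' t (hpq.symm ▸ hin3 t')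
        · -- both succ
          simp only [Fin.cons_succ] at hpq
          have := hinj' (a₁ := (i', t)) (a₂ := (j', t')) (by simpa using hpq)
          obtain ⟨h1, h2⟩ := Prod.mk.injEq _ _ _ _ ▸ this
          simp only [Prod.mk.injEq] at this
          exact Prod.ext (by simp [this.1]) (by simp [this.2])
      · intro i
        refine Fin.cases ?_ ?_ i
        · simp only [Fin.cons_zero]
          exact ⟨hu0N, hw0N'⟩
        · intro j
          simp only [Fin.cons_succ]
          exact hedge' j

lemma arith_main {γ : ℝ} {n : ℕ} (hγ0 : 0 < γ) (hγ1 : γ ≤ 1/4)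
    (hn6 : (1000000:ℝ) ≤ n) (hrγ : (1000000:ℝ) ≤ γ^3 * Real.sqrt n) :
    (2 * (n:ℝ)^2) * 2^(⌊γ^3 * n / 4⌋₊ + 5) *
      Real.exp (-(γ * n / 8)/(2 * ((n / ⌊γ * n⌋₊ + 1 : ℕ) : ℝ))) < 1 := by
  set r := Real.sqrt n with hr
  have hn0 : (0:ℝ) < n := by linarith
  have hr2 : r^2 = n := Real.sq_sqrt (le_of_lt hn0)
  have hr0 : 0 < r := Real.sqrt_pos.2 hn0
  have hr1000 : (1000:ℝ) ≤ r := by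
    nlinarith [hr2, Real.sqrt_nonneg (n:ℝ)]
  have hγ3n : (1000000:ℝ) * r ≤ γ^3 * n := by
    calc (1000000:ℝ) * r ≤ (γ^3 * r) * r := by nlinarith
      _ = γ^3 * n := by rw [← hr2]; ring
  have hγn_big : (1000000:ℝ) ≤ γ * n := by
    have h1 : γ^3 * n ≤ γ * n := by
      nlinarith [mul_nonneg (le_of_lt (mul_pos hγ0 hn0))
        (by nlinarith : (0:ℝ) ≤ 1 - γ^2)]
    linarith
  -- m bounds
  set m := ⌊γ * n⌋₊ with hm
  have hm_low : γ * n - 1 < (m:ℝ) := Nat.sub_one_lt_floor _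
  have hm_up : (m:ℝ) ≤ γ * n := Nat.floor_le (by positivity)
  have hm_pos : (0:ℝ) < m := by linarith
  have hA : (0:ℝ) < γ * n - 1 := by linarith
  -- Q bound
  set Q := (n / m + 1 : ℕ) with hQ
  have hQ0 : (0:ℝ) < (Q:ℝ) := by
    have : 0 < Q := Nat.succ_pos _
    exact_mod_cast this
  have hQup : (Q:ℝ) ≤ (1251/1000 : ℝ) / γ := by
    have h1 : ((n / m : ℕ) : ℝ) ≤ (n:ℝ) / (m:ℝ) := Nat.cast_div_le
    have h2 : (n:ℝ) / (m:ℝ) ≤ (n:ℝ) / (γ * n - 1) :=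
      div_le_div_of_nonneg_left (le_of_lt hn0) hA (le_of_lt hm_low)
    have h3 : (n:ℝ) / (γ * n - 1) + 1 ≤ (1251/1000 : ℝ) / γ := by
      rw [div_add' _ _ _ (ne_of_gt hA), div_le_div_iff₀ hA hγ0]
      nlinarith [mul_nonneg (by linarith : (0:ℝ) ≤ 1/4 - γ) (by positivity : (0:ℝ) ≤ γ * n)]
    have hQcast : (Q:ℝ) = ((n / m : ℕ) : ℝ) + 1 := by
      rw [hQ]; push_cast; ring
    rw [hQcast]
    linarith
  -- the exponent E
  set s := ⌊γ^3 * n / 4⌋₊ + 5 with hs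
  set E := (γ * (n:ℝ) / 8)/(2 * (Q:ℝ)) with hE
  have hEge : γ^2 * n / (20016/1000 : ℝ) ≤ E := by
    have h1 : 2 * (Q:ℝ) ≤ (2502/1000 : ℝ) / γ := by
      rw [div_eq_mul_inv] at hQup ⊢
      nlinarith [hQup, inv_pos.2 hγ0]
    have h2 : (γ * (n:ℝ) / 8)/((2502/1000 : ℝ)/γ) ≤ E := by
      apply div_le_div_of_nonneg_left (by positivity) (by positivity) h1
    have h3 : (γ * (n:ℝ) / 8)/((2502/1000 : ℝ)/γ) = γ^2 * n / (20016/1000 : ℝ) := by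
      field_simp
      ring
    linarith
  -- rewrite LHS as an exponential
  have h2exp : (2:ℝ) = Real.exp (Real.log 2) := (Real.exp_log (by norm_num)).symm
  have hnexp : (n:ℝ)^2 = Real.exp (Real.log n + Real.log n) := by
    rw [Real.exp_add, Real.exp_log hn0]
    ring
  have h2sexp : (2:ℝ)^s = Real.exp ((s:ℝ) * Real.log 2) := by
    rw [Real.exp_nat_mul, Real.exp_log (by norm_num : (0:ℝ) < 2)]
  have hLHS : (2 * (n:ℝ)^2) * 2^s * Real.exp (-E)
      = Real.exp (Real.log 2 + (Real.log n + Real.log n) + (s:ℝ) * Real.log 2 + (-E)) := by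
    rw [Real.exp_add, Real.exp_add, Real.exp_add, ← h2exp, ← hnexp, ← h2sexp]
  have hneg : -(γ * (n:ℝ) / 8)/(2*(Q:ℝ)) = -E := by rw [hE]; ring
  rw [show (2 * (n:ℝ)^2) * 2^s * Real.exp (-(γ * n / 8)/(2 * (Q:ℝ)))
      = (2 * (n:ℝ)^2) * 2^s * Real.exp (-E) by rw [hneg]]
  rw [hLHS, Real.exp_lt_one_iff]
  -- bound the exponent
  have hlog2 : Real.log 2 ≤ (6932/10000 : ℝ) := le_of_lt (lt_trans Real.log_two_lt_d9 (by norm_num))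
  have hlog2' : (0:ℝ) ≤ Real.log 2 := Real.log_nonneg (by norm_num)
  have hlogn : Real.log n ≤ 2 * (r - 1) := by
    rw [← hr2, Real.log_pow]
    have := Real.log_le_sub_one_of_pos hr0
    push_cast
    linarith
  have hsle : (s:ℝ) ≤ γ^3 * n / 4 + 5 := by
    rw [hs]
    push_cast
    have := Nat.floor_le (by positivity : (0:ℝ) ≤ γ^3 * n / 4)
    linarith
  have hslog : (s:ℝ) * Real.log 2 ≤ (γ^3 * n / 4 + 5) * (6932/10000 : ℝ) := by
    apply mul_le_mul hsle hlog2 hlog2'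
    positivity
  have hgam2 : 4 * (γ^3 * n) ≤ γ^2 * n := by
    nlinarith [mul_nonneg (mul_nonneg (le_of_lt hγ0) (le_of_lt hγ0)) (le_of_lt hn0)]
  have e1 : (γ^3 * n / 4 + 5) * (6932/10000 : ℝ) = (1733/10000 : ℝ) * (γ^3 * n) + (3466/1000 : ℝ) := by ring
  have e2 : γ^2 * (n:ℝ) / (20016/1000 : ℝ) ≥ (4/(20016/1000 : ℝ)) * (γ^3 * n) := by linarith
  linarith [hγ3n, hr1000, hEge, hslog, hlogn, hlog2, e1, e2]

/-- Reservoir Lemma: under minimum vertex degree `(1/4 + γ₂) C(n,2)` there is a small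
reservoir set `R` through which any `k ≤ γ₂³ n / 12` disjoint pairs of vertices can be
connected by loose paths of length two using `3k` distinct vertices of `R`. -/
theorem stmt_7 (γ₂ : ℝ) (h₁ : 0 < γ₂) (h₂ : γ₂ < 1 / 4) :
    ∃ n₀ : ℕ, ∀ n : ℕ, n > n₀ →
      ∀ H : Finset (Finset (Fin n)), (∀ e ∈ H, e.card = 3) →
      (∀ x : Fin n, (1 / 4 + γ₂) * (n.choose 2 : ℝ) ≤ (hdeg H x : ℝ)) →
      ∃ R : Finset (Fin n), (R.card : ℝ) ≤ γ₂ * n ∧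
        ∀ k : ℕ, (k : ℝ) ≤ γ₂ ^ 3 * n / 12 →
        ∀ a b : Fin k → Fin n,
          Function.Injective (fun p : Fin k × Bool => if p.2 then a p.1 else b p.1) →
          ∃ u v w : Fin k → Fin n,
            (∀ i, u i ∈ R ∧ v i ∈ R ∧ w i ∈ R) ∧
            Function.Injective (fun p : Fin k × Fin 3 =>
              if p.2 = 0 then u p.1 else if p.2 = 1 then v p.1 else w p.1) ∧
            ∀ i : Fin k, ({a i, u i, v i} : Finset (Fin n)) ∈ H ∧
              ({v i, w i, b i} : Finset (Fin n)) ∈ H := by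
  classical
  refine ⟨⌈((1000000:ℝ)/γ₂^3)^2⌉₊ + 1000000, ?_⟩
  intro n hn H hcard hdegH
  have hγ1 : γ₂ ≤ 1/4 := le_of_lt h₂
  have hn6 : (1000000:ℝ) ≤ n := by
    have : (1000000:ℕ) ≤ n := by omega
    exact_mod_cast this
  have hn0 : (0:ℝ) < n := by linarith
  have hrγ : (1000000:ℝ) ≤ γ₂^3 * Real.sqrt n := by
    have h1 : (((1000000:ℝ)/γ₂^3)^2) ≤ n := by
      calc ((1000000:ℝ)/γ₂^3)^2 ≤ (⌈((1000000:ℝ)/γ₂^3)^2⌉₊ : ℝ) := Nat.le_ceil _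
        _ ≤ n := by
            have : ⌈((1000000:ℝ)/γ₂^3)^2⌉₊ ≤ n := by omega
            exact_mod_cast this
    have h2 : (1000000:ℝ)/γ₂^3 ≤ Real.sqrt n :=
      (Real.le_sqrt (by positivity) (le_of_lt hn0)).2 h1
    calc (1000000:ℝ) = γ₂^3 * ((1000000:ℝ)/γ₂^3) := by field_simp
      _ ≤ γ₂^3 * Real.sqrt n := by
          apply mul_le_mul_of_nonneg_left h2 (by positivity)
  have hrn : (1000:ℝ) ≤ Real.sqrt n := by
    nlinarith [Real.sq_sqrt (le_of_lt hn0), Real.sqrt_nonneg (n:ℝ)]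
  have hsqrt_n : Real.sqrt n ≤ n := by
    nlinarith [Real.sq_sqrt (le_of_lt hn0)]
  have hγ3n_big : (1000000:ℝ) ≤ γ₂^3 * n := by
    nlinarith [Real.sqrt_nonneg (n:ℝ), hrγ, hsqrt_n, pow_pos h₁ 3]
  have hγn_big : (1000000:ℝ) ≤ γ₂ * n := by
    have h1 : γ₂^3 * n ≤ γ₂ * n := by
      nlinarith [mul_nonneg (le_of_lt (mul_pos h₁ hn0))
        (by nlinarith : (0:ℝ) ≤ 1 - γ₂^2)]
    linarith
  set m := ⌊γ₂ * n⌋₊ with hm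
  set s := ⌊γ₂^3 * n / 4⌋₊ + 5 with hs
  have hm_pos : 0 < m := Nat.floor_pos.2 (by linarith)
  have hmn : m ≤ n := by
    have h1 : γ₂ * n ≤ ((n:ℕ) : ℝ) := by nlinarith
    have := Nat.floor_mono h1
    rwa [Nat.floor_natCast] at this
  -- the family of sets that R must hit well
  set 𝒮₁ := (univ ×ˢ univ : Finset (Fin n × Fin n)).image
    (fun p => Aset γ₂ H p.1 ∩ Aset γ₂ H p.2) with h𝒮₁
  set 𝒮₂ := ((univ ×ˢ univ : Finset (Fin n × Fin n)).filter
      (fun p => (γ₂*n/8:ℝ) ≤ ((Nbr H p.1 p.2).card:ℝ))).image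
    (fun p => Nbr H p.1 p.2) with h𝒮₂
  set 𝒮 := 𝒮₁ ∪ 𝒮₂ with h𝒮
  have hScard : (𝒮.card : ℝ) ≤ 2 * (n:ℝ)^2 := by
    have h1 : 𝒮.card ≤ 𝒮₁.card + 𝒮₂.card := Finset.card_union_le _ _
    have h2 : 𝒮₁.card ≤ n * n := by
      calc 𝒮₁.card ≤ (univ ×ˢ univ : Finset (Fin n × Fin n)).card := Finset.card_image_le
        _ = n * n := by simp
    have h3 : 𝒮₂.card ≤ n * n := by
      calc 𝒮₂.card ≤ ((univ ×ˢ univ : Finset (Fin n × Fin n)).filter _).card :=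
            Finset.card_image_le
        _ ≤ (univ ×ˢ univ : Finset (Fin n × Fin n)).card :=
            Finset.card_le_card (Finset.filter_subset _ _)
        _ = n * n := by simp
    have : (𝒮.card : ℕ) ≤ 2 * (n * n) := by omega
    calc (𝒮.card : ℝ) ≤ ((2 * (n * n) : ℕ) : ℝ) := by exact_mod_cast this
      _ = 2 * (n:ℝ)^2 := by push_cast; ring
  have hAcard : ∀ x : Fin n, ((1/2+γ₂/4) * n : ℝ) ≤ ((Aset γ₂ H x).card : ℝ) :=
    fun x => Aset_card hcard h₁ hγ1 (by nlinarith) (hdegH x)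
  have hTsize : ∀ T ∈ 𝒮, (γ₂*n/8 : ℝ) ≤ (T.card : ℝ) := by
    intro T hT
    rcases Finset.mem_union.1 hT with hT1 | hT2
    · obtain ⟨p, _, rfl⟩ := Finset.mem_image.1 hT1
      have hu := Finset.card_union_add_card_inter (Aset γ₂ H p.1) (Aset γ₂ H p.2)
      have hun : ((Aset γ₂ H p.1 ∪ Aset γ₂ H p.2).card : ℝ) ≤ n := by
        have : (Aset γ₂ H p.1 ∪ Aset γ₂ H p.2).card ≤ n := by
          calc _ ≤ (univ : Finset (Fin n)).card := Finset.card_le_card (Finset.subset_univ _)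
            _ = n := by simp
        exact_mod_cast this
      have h1 := hAcard p.1
      have h2 := hAcard p.2
      have hcast : ((Aset γ₂ H p.1 ∪ Aset γ₂ H p.2).card : ℝ)
          + ((Aset γ₂ H p.1 ∩ Aset γ₂ H p.2).card : ℝ)
          = ((Aset γ₂ H p.1).card : ℝ) + ((Aset γ₂ H p.2).card : ℝ) := by
        exact_mod_cast hu
      nlinarith
    · obtain ⟨p, hp, rfl⟩ := Finset.mem_image.1 hT2
      exact (Finset.mem_filter.1 hp).2
  have hQpos : (0:ℝ) < 2 * (((n / m + 1 : ℕ)) : ℝ) := by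
    have : 0 < (n / m + 1 : ℕ) := Nat.succ_pos _
    have h' : (0:ℝ) < (((n / m + 1 : ℕ)) : ℝ) := by exact_mod_cast this
    linarith
  have hineq : ∀ T ∈ 𝒮, (𝒮.card : ℝ) * 2^s *
      Real.exp (-(T.card : ℝ)/(2*((n/m + 1 : ℕ) : ℝ))) < 1 := by
    intro T hT
    have hmono : Real.exp (-(T.card : ℝ)/(2*((n/m + 1 : ℕ) : ℝ)))
        ≤ Real.exp (-(γ₂ * n / 8)/(2*((n/m + 1 : ℕ) : ℝ))) := by
      apply Real.exp_le_exp.2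
      apply (div_le_div_iff_of_pos_right hQpos).2
      linarith [hTsize T hT]
    have hfinal := arith_main (γ := γ₂) (n := n) h₁ hγ1 hn6 hrγ
    rw [← hm, ← hs] at hfinal
    calc (𝒮.card : ℝ) * 2^s * Real.exp (-(T.card : ℝ)/(2*((n/m + 1 : ℕ) : ℝ)))
        ≤ (2*(n:ℝ)^2) * 2^s * Real.exp (-(γ₂ * n / 8)/(2*((n/m + 1 : ℕ) : ℝ))) := by
          apply mul_le_mul (mul_le_mul_of_nonneg_right hScard (by positivity)) hmono
            (le_of_lt (Real.exp_pos _)) (by positivity)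
      _ < 1 := hfinal
  obtain ⟨R, hRm, hRhit⟩ := exists_hitting hm_pos hmn 𝒮 hineq
  have hP1 : ∀ a b : Fin n, s ≤ ((R ∩ (Aset γ₂ H a ∩ Aset γ₂ H b)).card) := by
    intro a b
    apply hRhit
    apply Finset.mem_union_left
    exact Finset.mem_image.2 ⟨(a, b), by simp, rfl⟩
  have hP2 : ∀ x v : Fin n, (γ₂ * n / 8 : ℝ) ≤ ((Nbr H x v).card : ℝ) →
      s ≤ ((R ∩ Nbr H x v).card) := by
    intro x v hxv
    apply hRhit
    apply Finset.mem_union_right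
    exact Finset.mem_image.2 ⟨(x, v), Finset.mem_filter.2 ⟨by simp, hxv⟩, rfl⟩
  refine ⟨R, ?_, ?_⟩
  · calc (R.card : ℝ) ≤ (m : ℝ) := by exact_mod_cast hRm
      _ ≤ γ₂ * n := Nat.floor_le (by positivity)
  · intro k hk a b _
    have h3k : 3 * k ≤ s := by
      have h1 : ((3 * k : ℕ) : ℝ) ≤ γ₂^3 * n / 4 := by push_cast; linarith
      have := Nat.le_floor h1
      omega
    obtain ⟨u, v, w, hmem, hinj, hedge⟩ :=
      greedy hP1 hP2 k a b ∅ (by simpa using h3k)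
    exact ⟨u, v, w,
      fun i => ⟨(hmem i).1.1, (hmem i).2.1.1, (hmem i).2.2.1⟩, hinj, hedge⟩
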